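/- Let d ≥ 2 be an integer and 0 < s < 1/2 a real number. Let I ⊆ 𝕋 be the image under the quotient map ℝ → ℝ/ℤ of the open interval (0, s), and let B = I^d ⊆ 𝕋^d. Then μ(B) = s^d and μ(π₁(B) + π_d(B)) = (2s)^{d−1}. -/

import Mathlib

open Filter MeasureTheory Pointwise

abbrev 𝕋 : Type := AddCircle (1 : ℝ)

/-- Projection `𝕋^{n+1} → 𝕋^n` forgetting the first coordinate. -/
def projFirst (n : ℕ) (x : Fin (n + 1) → 𝕋) (i : Fin n) : 𝕋 := x i.succ

/-- Projection `𝕋^{n+1} → 𝕋^n` forgetting the last coordinate. -/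
def projLast (n : ℕ) (x : Fin (n + 1) → 𝕋) (i : Fin n) : 𝕋 := x i.castSucc

lemma volume_image_Ioo (t : ℝ) (ht1 : t ≤ 1) :
    volume (((↑) : ℝ → 𝕋) '' Set.Ioo 0 t) = ENNReal.ofReal t := by
  have hopen : IsOpen (((↑) : ℝ → 𝕋) '' Set.Ioo 0 t) :=
    QuotientAddGroup.isOpenMap_coe _ isOpen_Ioo
  rw [AddCircle.add_projection_respects_measure (T := 1) 0 hopen.measurableSet]
  have h : QuotientAddGroup.mk ⁻¹' (((↑) : ℝ → 𝕋) '' Set.Ioo 0 t) ∩ Set.Ioc 0 (0 + 1)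
      = Set.Ioo 0 t := by
    ext x
    simp only [Set.mem_inter_iff, Set.mem_preimage, Set.mem_image, Set.mem_Ioc, Set.mem_Ioo,
      zero_add]
    constructor
    · rintro ⟨⟨y, ⟨hy0, hyt⟩, hxy⟩, hx0, hx1⟩
      have heq : x = y := by
        have h := (QuotientAddGroup.eq_iff_sub_mem).mp hxy.symm
        rw [AddSubgroup.mem_zmultiples_iff] at h
        obtain ⟨k, hk⟩ := h
        have hk' : (k : ℝ) = x - y := by simpa using hk
        have hk1 : (k : ℝ) < 1 := by rw [hk']; linarith [hyt.trans_le ht1]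
        have hk2 : (-1 : ℝ) < k := by rw [hk']; linarith
        have h1 : k < 1 := by exact_mod_cast hk1
        have h2 : -1 < k := by exact_mod_cast hk2
        have : k = 0 := by omega
        rw [this] at hk'; simp at hk'; linarith
      exact heq ▸ ⟨hy0, hyt⟩
    · rintro ⟨hx0, hxt⟩
      exact ⟨⟨x, ⟨hx0, hxt⟩, rfl⟩, hx0, (lt_of_lt_of_le hxt ht1).le⟩
  rw [h, Real.volume_Ioo, sub_zero]

lemma Ioo_add_Ioo' (a b : ℝ) (ha : 0 < a) (hb : 0 < b) :
    Set.Ioo (0:ℝ) a + Set.Ioo 0 b = Set.Ioo 0 (a + b) := by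
  ext x
  simp only [Set.mem_add, Set.mem_Ioo]
  constructor
  · rintro ⟨u, ⟨hu0, hua⟩, v, ⟨hv0, hvb⟩, rfl⟩
    constructor <;> linarith
  · rintro ⟨hx0, hxab⟩
    have h1 : max 0 (x - b) < min a x :=
      max_lt (lt_min ha hx0) (lt_min (by linarith) (by linarith))
    have h2 := le_max_left 0 (x - b)
    have h3 := le_max_right 0 (x - b)
    have h4 := min_le_left a x
    have h5 := min_le_right a x
    exact ⟨(max 0 (x - b) + min a x) / 2, ⟨by linarith, by linarith⟩,
      x - (max 0 (x - b) + min a x) / 2, ⟨by linarith, by linarith⟩, by ring⟩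

lemma pi_add_pi {ι : Type*} {α : Type*} [Add α] (f g : ι → Set α) :
    (Set.univ.pi f) + (Set.univ.pi g) = Set.univ.pi (fun i => f i + g i) := by
  ext x
  constructor
  · rintro ⟨a, ha, b, hb, rfl⟩ i _
    exact ⟨a i, ha i (Set.mem_univ i), b i, hb i (Set.mem_univ i), rfl⟩
  · intro hx
    choose a ha b hb hab using fun i => hx i (Set.mem_univ i)
    exact ⟨a, fun i _ => ha i, b, fun i _ => hb i, funext fun i => hab i⟩

/-- Let `d = n + 1 ≥ 2` be an integer and `0 < s < 1/2` a real number. Let `I ⊆ 𝕋` be the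
image under the quotient map `ℝ → ℝ/ℤ` of the open interval `(0, s)`, and let `B = I^d ⊆ 𝕋^d`.
Then `μ(B) = s^d` and `μ(π₁(B) + π_d(B)) = (2s)^{d−1}`. -/
theorem measure_cube_and_proj_sum (n : ℕ) (hn : 1 ≤ n) (s : ℝ) (hs : 0 < s) (hs' : s < 1 / 2)
    (I : Set 𝕋) (hI : I = ((↑) : ℝ → 𝕋) '' Set.Ioo 0 s)
    (B : Set (Fin (n + 1) → 𝕋)) (hB : B = Set.univ.pi fun _ => I) :
    (volume B).toReal = s ^ (n + 1) ∧
    (volume (projFirst n '' B + projLast n '' B)).toReal = (2 * s) ^ n := by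
  have hIvol : volume I = ENNReal.ofReal s := by
    rw [hI]; exact volume_image_Ioo s (by linarith)
  have ha : ((s / 2 : ℝ) : 𝕋) ∈ I := by
    rw [hI]; exact ⟨s / 2, ⟨by linarith, by linarith⟩, rfl⟩
  constructor
  · rw [hB, volume_pi_pi]
    simp only [hIvol, Finset.prod_const, Finset.card_univ, Fintype.card_fin]
    rw [← ENNReal.ofReal_pow hs.le, ENNReal.toReal_ofReal (by positivity)]
  · have hproj1 : projFirst n '' B = Set.univ.pi fun _ => I := by
      ext y
      constructor
      · rintro ⟨x, hx, rfl⟩ i _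
        rw [hB] at hx
        exact hx i.succ (Set.mem_univ _)
      · intro hy
        refine ⟨Fin.cons ((s / 2 : ℝ) : 𝕋) y, ?_, ?_⟩
        · rw [hB]
          intro i _
          induction i using Fin.cases with
          | zero => simpa using ha
          | succ j => simpa using hy j (Set.mem_univ j)
        · funext i; simp [projFirst, Fin.cons_succ]
    have hproj2 : projLast n '' B = Set.univ.pi fun _ => I := by
      ext y
      constructor
      · rintro ⟨x, hx, rfl⟩ i _
        rw [hB] at hx
        exact hx i.castSucc (Set.mem_univ _)
      · intro hy
        refine ⟨Fin.snoc y ((s / 2 : ℝ) : 𝕋), ?_, ?_⟩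
        · rw [hB]
          intro i _
          induction i using Fin.lastCases with
          | last => simpa using ha
          | cast j => simpa using hy j (Set.mem_univ j)
        · funext i; simp [projLast, Fin.snoc_castSucc]
    have hII : I + I = ((↑) : ℝ → 𝕋) '' Set.Ioo 0 (2 * s) := by
      have : ((↑) : ℝ → 𝕋) = ⇑(QuotientAddGroup.mk' (AddSubgroup.zmultiples (1:ℝ))) := rfl
      rw [hI, this, ← Set.image_add, Ioo_add_Ioo' s s hs hs]
      norm_num [two_mul]
    rw [hproj1, hproj2, pi_add_pi]
    simp_rw [hII]
    rw [volume_pi_pi]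
    have : volume (((↑) : ℝ → 𝕋) '' Set.Ioo 0 (2 * s)) = ENNReal.ofReal (2 * s) :=
      volume_image_Ioo (2 * s) (by linarith)
    simp [this, ← ENNReal.ofReal_pow (by positivity : (0:ℝ) ≤ 2 * s),
      ENNReal.toReal_ofReal (by positivity : (0:ℝ) ≤ (2 * s) ^ n), ENNReal.toReal_ofReal hs.le]
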